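/- Every compact subset A of ℝⁿ with at least two points contains a finite subset with the same circumradius as A. -/

import Mathlib

open Metric Set
open scoped RealInnerProductSpace

/-- The circumradius of a set: the infimum of radii of closed balls containing it. -/
noncomputable def circumradius {n : ℕ} (A : Set (EuclideanSpace ℝ (Fin n))) : ℝ :=
  sInf {r : ℝ | ∃ c : EuclideanSpace ℝ (Fin n), A ⊆ Metric.closedBall c r}

/-- The convex hull of a nonempty compact set in Euclidean space is compact. -/
private lemma isCompact_convexHull_aux {n : ℕ} {T : Set (EuclideanSpace ℝ (Fin n))}
    (hT : IsCompact T) (hne : T.Nonempty) : IsCompact (convexHull ℝ T) := by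
  classical
  obtain ⟨t₀, ht₀⟩ := hne
  set k := n + 1 with hk
  set φ : (Fin k → ℝ) × (Fin k → EuclideanSpace ℝ (Fin n)) → EuclideanSpace ℝ (Fin n) :=
    fun p => ∑ i, p.1 i • p.2 i with hφdef
  have hφ : Continuous φ := by
    apply continuous_finset_sum
    intro i _
    exact ((continuous_apply i).comp continuous_fst).smul
      ((continuous_apply i).comp continuous_snd)
  have hK : IsCompact ((stdSimplex ℝ (Fin k)) ×ˢ (Set.pi Set.univ fun _ : Fin k => T)) :=
    (isCompact_stdSimplex _ _).prod (isCompact_univ_pi fun _ => hT)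
  have himg : convexHull ℝ T
      = φ '' ((stdSimplex ℝ (Fin k)) ×ˢ (Set.pi Set.univ fun _ : Fin k => T)) := by
    apply Subset.antisymm
    · intro x hx
      obtain ⟨ι, hι, z, w, hzT, hai, hwpos, hwsum, hxx⟩ :=
        eq_pos_convex_span_of_mem_convexHull hx
      have hcard : Fintype.card ι ≤ k := by
        have h1 := hai.card_le_finrank_succ
        have h2 : Module.finrank ℝ (vectorSpan ℝ (Set.range z)) ≤ n := by
          have := Submodule.finrank_le (vectorSpan ℝ (Set.range z))
          simpa [finrank_euclideanSpace_fin] using this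
        omega
      obtain ⟨e⟩ : Nonempty (ι ↪ Fin k) := by
        apply Function.Embedding.nonempty_of_card_le
        simpa using hcard
      set w' : Fin k → ℝ := fun j => if h : ∃ i, e i = j then w h.choose else 0 with hw'def
      set z' : Fin k → EuclideanSpace ℝ (Fin n) :=
        fun j => if h : ∃ i, e i = j then z h.choose else t₀ with hz'def
      have hw' : ∀ i, w' (e i) = w i := by
        intro i
        have h : ∃ i', e i' = e i := ⟨i, rfl⟩
        simp only [hw'def, dif_pos h]
        rw [e.injective h.choose_spec]
      have hz' : ∀ i, z' (e i) = z i := by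
        intro i
        have h : ∃ i', e i' = e i := ⟨i, rfl⟩
        simp only [hz'def, dif_pos h]
        rw [e.injective h.choose_spec]
      have hre : ∀ (f : Fin k → EuclideanSpace ℝ (Fin n)),
          (∀ j, (¬ ∃ i, e i = j) → f j = 0) → ∑ j, f j = ∑ i, f (e i) := by
        intro f hf
        rw [← Finset.sum_map Finset.univ e f]
        apply (Finset.sum_subset (Finset.subset_univ _) _).symm
        intro j _ hj
        apply hf
        rintro ⟨i, rfl⟩
        exact hj (Finset.mem_map_of_mem _ (Finset.mem_univ i))
      have hreR : ∀ (f : Fin k → ℝ),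
          (∀ j, (¬ ∃ i, e i = j) → f j = 0) → ∑ j, f j = ∑ i, f (e i) := by
        intro f hf
        rw [← Finset.sum_map Finset.univ e f]
        apply (Finset.sum_subset (Finset.subset_univ _) _).symm
        intro j _ hj
        apply hf
        rintro ⟨i, rfl⟩
        exact hj (Finset.mem_map_of_mem _ (Finset.mem_univ i))
      refine ⟨(w', z'), ⟨⟨fun j => ?_, ?_⟩, fun j _ => ?_⟩, ?_⟩
      · by_cases h : ∃ i, e i = j
        · simp only [hw'def, dif_pos h]
          exact (hwpos _).le
        · simp only [hw'def, dif_neg h]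
          exact le_rfl
      · rw [hreR w' (fun j hj => by simp only [hw'def, dif_neg hj])]
        simp only [hw']
        exact hwsum
      · by_cases h : ∃ i, e i = j
        · simp only [hz'def, dif_pos h]
          exact hzT (Set.mem_range_self _)
        · simp only [hz'def, dif_neg h]
          exact ht₀
      · show ∑ j, w' j • z' j = x
        rw [hre (fun j => w' j • z' j)
          (fun j hj => by simp only [hw'def, dif_neg hj, zero_smul])]
        simp only [hw', hz']
        exact hxx
    · rintro _ ⟨⟨w, z⟩, ⟨⟨hw0, hw1⟩, hzT⟩, rfl⟩
      exact (convex_convexHull ℝ T).sum_mem (fun i _ => hw0 i) hw1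
        (fun i _ => subset_convexHull ℝ T (hzT i (Set.mem_univ i)))
  rw [himg]
  exact hK.image hφ

/-- If `c₀` is in the convex hull of `F` and every point of `F` is at distance `R` from `c₀`,
then any closed ball containing `F` has radius at least `R`. -/
private lemma circum_ge_aux {n : ℕ} {F : Set (EuclideanSpace ℝ (Fin n))}
    {c₀ : EuclideanSpace ℝ (Fin n)} {R : ℝ} (hR : 0 ≤ R)
    (hcc : c₀ ∈ convexHull ℝ F) (hdist : ∀ x ∈ F, dist x c₀ = R)
    {c' : EuclideanSpace ℝ (Fin n)} {r : ℝ} (hF : F ⊆ closedBall c' r) : R ≤ r := by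
  have hx : ∃ x ∈ F, ⟪x - c₀, c' - c₀⟫ ≤ 0 := by
    by_contra hpos
    push_neg at hpos
    have hlin : IsLinearMap ℝ (fun y : EuclideanSpace ℝ (Fin n) => ⟪y, c' - c₀⟫) :=
      ⟨fun a b => inner_add_left a b _, fun c a => real_inner_smul_left a _ c⟩
    have hconv : Convex ℝ {y : EuclideanSpace ℝ (Fin n) | ⟪c₀, c' - c₀⟫ < ⟪y, c' - c₀⟫} :=
      convex_halfSpace_gt hlin _
    have hsub : convexHull ℝ F ⊆
        {y : EuclideanSpace ℝ (Fin n) | ⟪c₀, c' - c₀⟫ < ⟪y, c' - c₀⟫} := by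
      apply convexHull_min _ hconv
      intro x hxF
      have := hpos x hxF
      rw [inner_sub_left] at this
      simpa using this
    have := hsub hcc
    simp at this
  obtain ⟨x, hxF, hxineq⟩ := hx
  have hd : dist x c' ≤ r := hF hxF
  have hxc : ‖x - c₀‖ = R := by rw [← dist_eq_norm]; exact hdist x hxF
  have hexp : ‖x - c'‖ ^ 2
      = ‖x - c₀‖ ^ 2 - 2 * ⟪x - c₀, c' - c₀⟫ + ‖c' - c₀‖ ^ 2 := by
    rw [← norm_sub_sq_real]
    congr 1
    abel
  have hge : R ^ 2 ≤ ‖x - c'‖ ^ 2 := by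
    rw [hexp, hxc]
    nlinarith [sq_nonneg (‖c' - c₀‖)]
  rw [← dist_eq_norm] at hge
  nlinarith [dist_nonneg (x := x) (y := c')]

set_option maxHeartbeats 1000000 in
theorem exists_finite_subset_same_circumradius (n : ℕ)
    (A : Set (EuclideanSpace ℝ (Fin n))) (hA : IsCompact A)
    (h2 : ∃ a ∈ A, ∃ b ∈ A, a ≠ b) :
    ∃ F : Finset (EuclideanSpace ℝ (Fin n)),
      (F : Set (EuclideanSpace ℝ (Fin n))) ⊆ A ∧
      circumradius (F : Set (EuclideanSpace ℝ (Fin n))) = circumradius A := by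
  classical
  obtain ⟨a, ha, b, hb, hab⟩ := h2
  have hAne : A.Nonempty := ⟨a, ha⟩
  set S : Set ℝ := {r : ℝ | ∃ c : EuclideanSpace ℝ (Fin n), A ⊆ closedBall c r} with hSdef
  have hSne : S.Nonempty := by
    obtain ⟨r, hr⟩ := hA.isBounded.subset_closedBall (0 : EuclideanSpace ℝ (Fin n))
    exact ⟨r, 0, hr⟩
  have hSbd : ∀ r ∈ S, dist a b / 2 ≤ r := by
    rintro r ⟨c, hc⟩
    have h1 : dist a c ≤ r := hc ha
    have h2 : dist b c ≤ r := hc hb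
    have h3 := dist_triangle a c b
    have h4 : dist c b = dist b c := dist_comm c b
    linarith
  have hbdd : BddBelow S := ⟨dist a b / 2, hSbd⟩
  set R : ℝ := sInf S with hRdef
  have hRpos : 0 < R := by
    have : dist a b / 2 ≤ R := le_csInf hSne hSbd
    have hd : 0 < dist a b := dist_pos.mpr hab
    linarith
  -- the farthest-distance function
  set g : EuclideanSpace ℝ (Fin n) → ℝ :=
    fun c => sSup ((fun x => dist x c) '' A) with hgdef
  have himg : ∀ c : EuclideanSpace ℝ (Fin n), IsCompact ((fun x => dist x c) '' A) :=
    fun c => hA.image (continuous_id.dist continuous_const)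
  have hgmem : ∀ c : EuclideanSpace ℝ (Fin n), A ⊆ closedBall c (g c) := by
    intro c x hx
    exact le_csSup (himg c).bddAbove ⟨x, hx, rfl⟩
  have hgle : ∀ (c : EuclideanSpace ℝ (Fin n)) (r : ℝ), A ⊆ closedBall c r → g c ≤ r := by
    intro c r h
    apply csSup_le (hAne.image _)
    rintro _ ⟨x, hx, rfl⟩
    exact h hx
  have hgS : ∀ c : EuclideanSpace ℝ (Fin n), g c ∈ S := fun c => ⟨c, hgmem c⟩
  have hgcont : Continuous g := by
    have : LipschitzWith 1 g := by
      apply LipschitzWith.of_le_add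
      intro c c'
      apply csSup_le (hAne.image _)
      rintro _ ⟨x, hx, rfl⟩
      calc dist x c ≤ dist x c' + dist c' c := dist_triangle x c' c
        _ ≤ g c' + dist c c' := by
            have h5 : dist x c' ≤ g c' := le_csSup (himg c').bddAbove ⟨x, hx, rfl⟩
            have h6 : dist c' c = dist c c' := dist_comm c' c
            linarith
    exact this.continuous
  -- minimize g on a compact ball of centers
  have hKcpt : IsCompact (closedBall a (R + 1)) := isCompact_closedBall a (R + 1)
  have hKne : (closedBall a (R + 1)).Nonempty := ⟨a, mem_closedBall_self (by linarith)⟩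
  obtain ⟨c₀, hc₀K, hmin⟩ := hKcpt.exists_isMinOn hKne hgcont.continuousOn
  -- g c₀ = R
  obtain ⟨r₁, hr₁S, hr₁lt⟩ : ∃ r ∈ S, r < R + 1 := by
    obtain ⟨r, hrS, hrlt⟩ := (csInf_lt_iff hbdd hSne).mp (by linarith : sInf S < R + 1)
    exact ⟨r, hrS, hrlt⟩
  have hcenter_mem : ∀ r ∈ S, r < R + 1 → g c₀ ≤ r := by
    rintro r ⟨c, hc⟩ hrlt
    have hcK : c ∈ closedBall a (R + 1) := by
      have : dist a c ≤ r := hc ha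
      rw [mem_closedBall, dist_comm]
      linarith
    exact le_trans (hmin hcK) (hgle c r hc)
  have hgc₀R : g c₀ = R := by
    apply le_antisymm
    · apply le_csInf hSne
      intro r hrS
      by_cases h : r < R + 1
      · exact hcenter_mem r hrS h
      · have := hcenter_mem r₁ hr₁S hr₁lt
        push_neg at h
        linarith
    · exact csInf_le hbdd (hgS c₀)
  have hball : A ⊆ closedBall c₀ R := hgc₀R ▸ hgmem c₀
  -- the contact set
  set T : Set (EuclideanSpace ℝ (Fin n)) := {x ∈ A | dist x c₀ = R} with hTdef
  have hTA : T ⊆ A := fun x hx => hx.1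
  have hTcl : IsCompact T := by
    have : T = A ∩ (fun x => dist x c₀) ⁻¹' {R} := by
      ext x; simp [hTdef]
    rw [this]
    exact hA.inter_right (isClosed_singleton.preimage (continuous_id.dist continuous_const))
  have hTne : T.Nonempty := by
    have h1 : sSup ((fun x => dist x c₀) '' A) ∈ (fun x => dist x c₀) '' A :=
      (himg c₀).sSup_mem (hAne.image _)
    obtain ⟨x, hx, hxd⟩ := h1
    have hxd' : dist x c₀ = g c₀ := hxd
    exact ⟨x, hx, hxd'.trans hgc₀R⟩
  -- c₀ is in the convex hull of the contact set
  have hcc : c₀ ∈ convexHull ℝ T := by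
    by_contra hnc
    have hclosed : IsClosed (convexHull ℝ T) := (isCompact_convexHull_aux hTcl hTne).isClosed
    obtain ⟨f, u, hfc, hfT⟩ :=
      geometric_hahn_banach_point_closed (convex_convexHull ℝ T) hclosed hnc
    set v : EuclideanSpace ℝ (Fin n) :=
      (InnerProductSpace.toDual ℝ (EuclideanSpace ℝ (Fin n))).symm f with hvdef
    have hv : ∀ y, ⟪v, y⟫ = f y := fun y => InnerProductSpace.toDual_symm_apply
    set δ : ℝ := u - f c₀ with hδdef
    have hδpos : 0 < δ := by simp [hδdef]; linarith
    have hTδ : ∀ x ∈ T, δ < ⟪v, x - c₀⟫ := by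
      intro x hx
      have := hfT x (subset_convexHull ℝ T hx)
      rw [inner_sub_right, hv, hv]
      simp [hδdef]
      linarith
    set B : Set (EuclideanSpace ℝ (Fin n)) := {x ∈ A | ⟪v, x - c₀⟫ ≤ δ} with hBdef
    have hBcpt : IsCompact B := by
      have : B = A ∩ (fun x => ⟪v, x - c₀⟫) ⁻¹' Iic δ := by
        ext x; simp [hBdef]
      rw [this]
      exact hA.inter_right (isClosed_Iic.preimage
        (Continuous.inner continuous_const (continuous_id.sub continuous_const)))
    have hBlt : ∀ x ∈ B, dist x c₀ < R := by
      intro x hx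
      have hle : dist x c₀ ≤ R := hball hx.1
      rcases lt_or_eq_of_le hle with h | h
      · exact h
      · exact absurd hx.2 (not_le.mpr (hTδ x ⟨hx.1, h⟩))
    set ρ : ℝ := sSup (insert 0 ((fun x => dist x c₀) '' B)) with hρdef
    have hins : IsCompact (insert (0:ℝ) ((fun x => dist x c₀) '' B)) := by
      rw [Set.insert_eq]
      exact isCompact_singleton.union (hBcpt.image (continuous_id.dist continuous_const))
    have hρmem : ρ ∈ insert (0:ℝ) ((fun x => dist x c₀) '' B) :=
      hins.sSup_mem (insert_nonempty _ _)
    have hρlt : ρ < R := by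
      rcases hρmem with h | ⟨x, hx, hxd⟩
      · rw [h]; exact hRpos
      · rw [← hxd]; exact hBlt x hx
    have hρ0 : 0 ≤ ρ := le_csSup hins.bddAbove (mem_insert _ _)
    have hρB : ∀ x ∈ B, dist x c₀ ≤ ρ :=
      fun x hx => le_csSup hins.bddAbove (mem_insert_of_mem _ ⟨x, hx, rfl⟩)
    set t : ℝ := min (δ / (‖v‖ ^ 2 + 1)) ((R - ρ) / (‖v‖ + δ / (2 * R) + 1)) with htdef
    have ht0 : 0 < t := by
      apply lt_min
      · positivity
      · have : 0 < R - ρ := by linarith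
        positivity
    set ε : ℝ := t * δ / (2 * R) with hεdef
    have hε0 : 0 < ε := by positivity
    have ht1 : t * (‖v‖ ^ 2 + 1) ≤ δ := by
      have := min_le_left (δ / (‖v‖ ^ 2 + 1)) ((R - ρ) / (‖v‖ + δ / (2 * R) + 1))
      rw [← htdef] at this
      have hpos : (0:ℝ) < ‖v‖ ^ 2 + 1 := by positivity
      calc t * (‖v‖ ^ 2 + 1) ≤ δ / (‖v‖ ^ 2 + 1) * (‖v‖ ^ 2 + 1) := by nlinarith
        _ = δ := by field_simp
    have ht2 : t * (‖v‖ + δ / (2 * R) + 1) ≤ R - ρ := by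
      have := min_le_right (δ / (‖v‖ ^ 2 + 1)) ((R - ρ) / (‖v‖ + δ / (2 * R) + 1))
      rw [← htdef] at this
      have hpos : (0:ℝ) < ‖v‖ + δ / (2 * R) + 1 := by positivity
      calc t * (‖v‖ + δ / (2 * R) + 1)
          ≤ (R - ρ) / (‖v‖ + δ / (2 * R) + 1) * (‖v‖ + δ / (2 * R) + 1) := by nlinarith
        _ = R - ρ := by field_simp
    have hkey : ρ + t * ‖v‖ + ε ≤ R := by
      have hεeq : ε = t * (δ / (2 * R)) := by rw [hεdef]; ring
      nlinarith [norm_nonneg v]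
    have hRε : 0 ≤ R - ε := by nlinarith [norm_nonneg v]
    have hball' : A ⊆ closedBall (c₀ + t • v) (R - ε) := by
      intro x hx
      rw [mem_closedBall]
      by_cases hxB : x ∈ B
      · have h1 : dist x c₀ ≤ ρ := hρB x hxB
        have h2 : dist c₀ (c₀ + t • v) = t * ‖v‖ := by
          rw [dist_eq_norm]
          simp [norm_smul, abs_of_pos ht0]
        calc dist x (c₀ + t • v) ≤ dist x c₀ + dist c₀ (c₀ + t • v) := dist_triangle _ _ _
          _ = dist x c₀ + t * ‖v‖ := by rw [h2]
          _ ≤ R - ε := by linarith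
      · have hxδ : δ < ⟪v, x - c₀⟫ := by
          by_contra h
          exact hxB ⟨hx, not_lt.mp h⟩
        have hxc : ‖x - c₀‖ ≤ R := by
          rw [← dist_eq_norm]; exact hball hx
        have hexp : ‖x - (c₀ + t • v)‖ ^ 2
            = ‖x - c₀‖ ^ 2 - 2 * (t * ⟪v, x - c₀⟫) + t ^ 2 * ‖v‖ ^ 2 := by
          have h1 : x - (c₀ + t • v) = (x - c₀) - t • v := by abel
          rw [h1, norm_sub_sq_real, real_inner_smul_right, norm_smul]
          rw [real_inner_comm]
          simp [abs_of_pos ht0]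
          ring
        have hsq : ‖x - (c₀ + t • v)‖ ^ 2 ≤ (R - ε) ^ 2 := by
          have h3 : t ^ 2 * ‖v‖ ^ 2 ≤ t * δ := by nlinarith
          have h4 : 2 * R * ε = t * δ := by
            rw [hεdef]; field_simp
          nlinarith [norm_nonneg (x - c₀)]
        rw [dist_eq_norm]
        nlinarith [norm_nonneg (x - (c₀ + t • v))]
    have : R ≤ R - ε := csInf_le hbdd ⟨c₀ + t • v, hball'⟩
    linarith
  -- Carathéodory : extract a finite subset
  rw [convexHull_eq_union] at hcc
  simp only [Set.mem_iUnion] at hcc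
  obtain ⟨F, hFT, -, hcF⟩ := hcc
  have hFA : (F : Set (EuclideanSpace ℝ (Fin n))) ⊆ A := fun x hx => hTA (hFT hx)
  refine ⟨F, hFA, ?_⟩
  set SF : Set ℝ := {r : ℝ | ∃ c : EuclideanSpace ℝ (Fin n),
      (F : Set (EuclideanSpace ℝ (Fin n))) ⊆ closedBall c r} with hSFdef
  have hFne : (F : Set (EuclideanSpace ℝ (Fin n))).Nonempty := by
    rw [← convexHull_nonempty_iff (𝕜 := ℝ)]
    exact ⟨c₀, hcF⟩
  have hSFR : ∀ r ∈ SF, R ≤ r := by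
    rintro r ⟨c', hc'⟩
    exact circum_ge_aux hRpos.le hcF (fun x hx => (hFT hx).2) hc'
  have hSFbdd : BddBelow SF := ⟨R, hSFR⟩
  have hSFne : SF.Nonempty := ⟨R, c₀, fun x hx => hball (hFA hx)⟩
  apply le_antisymm
  · apply csInf_le_csInf hSFbdd hSne
    rintro r ⟨c, hc⟩
    exact ⟨c, fun x hx => hc (hFA hx)⟩
  · exact le_csInf hSFne hSFR
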